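/- Let n > 2 be an even integer. Then U'_n(x) > 0 for all x in the open interval (cos(π/n), 1); consequently every root of U'_n is at most cos(π/n). -/

import Mathlib

open Polynomial Polynomial.Chebyshev

lemma aux_ge_one (x : ℝ) (hx : 1 ≤ x) : ∀ m : ℕ,
    1 ≤ (U ℝ (m : ℤ)).eval x ∧ (U ℝ (m : ℤ)).eval x ≤ (U ℝ ((m : ℤ) + 1)).eval x ∧
    0 ≤ (derivative (U ℝ (m : ℤ))).eval x ∧
    (derivative (U ℝ (m : ℤ))).eval x ≤ (derivative (U ℝ ((m : ℤ) + 1))).eval x := by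
  intro m
  induction m with
  | zero =>
    refine ⟨?_, ?_, ?_, ?_⟩ <;> simp [U_zero, U_one] <;> linarith
  | succ k ih =>
    obtain ⟨hU1, hU2, hD1, hD2⟩ := ih
    have hc : ((k + 1 : ℕ) : ℤ) = (k : ℤ) + 1 := by push_cast; ring
    have hc1 : (k : ℤ) + 1 + 1 = (k : ℤ) + 2 := by ring
    have e : U ℝ ((k : ℤ) + 2) = 2 * X * U ℝ ((k : ℤ) + 1) - U ℝ (k : ℤ) := U_add_two ℝ k
    rw [hc, hc1, e]
    simp only [derivative_sub, derivative_mul, derivative_X, derivative_ofNat, eval_sub, eval_mul,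
      eval_add, eval_X, eval_ofNat, mul_one, eval_one, zero_mul, add_zero, zero_add,
      derivative_one, eval_zero, mul_zero]
    have h1 : (1 : ℝ) ≤ eval x (U ℝ ((k : ℤ) + 1)) := le_trans hU1 hU2
    refine ⟨h1, ?_, by linarith, ?_⟩ <;>
      nlinarith [mul_nonneg (by linarith : (0:ℝ) ≤ 2 * x - 1) (by linarith : (0:ℝ) ≤ eval x (U ℝ ((k:ℤ)+1))),
        mul_nonneg (by linarith : (0:ℝ) ≤ 2 * x - 1) hD1,
        mul_nonneg (by linarith : (0:ℝ) ≤ 2 * x - 1) (le_trans hD1 hD2)]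

-- U'_n(cos t) * sin t ^ 3 = sin((n+1)t) cos t - (n+1) cos((n+1)t) sin t
lemma aux_deriv_eq (n : ℕ) (t : ℝ) :
    (derivative (U ℝ (n : ℤ))).eval (Real.cos t) * Real.sin t ^ 3 =
      Real.sin (((n : ℝ) + 1) * t) * Real.cos t
        - ((n : ℝ) + 1) * Real.cos (((n : ℝ) + 1) * t) * Real.sin t := by
  have hU : ∀ θ : ℝ, (U ℝ (n : ℤ)).eval (Real.cos θ) * Real.sin θ
      = Real.sin (((n : ℝ) + 1) * θ) := by
    intro θ
    have := Polynomial.Chebyshev.U_real_cos θ (n : ℤ)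
    push_cast at this ⊢
    convert this using 3
  have hL : HasDerivAt (fun θ => (U ℝ (n : ℤ)).eval (Real.cos θ) * Real.sin θ)
      ((derivative (U ℝ (n : ℤ))).eval (Real.cos t) * (-Real.sin t) * Real.sin t
        + (U ℝ (n : ℤ)).eval (Real.cos t) * Real.cos t) t :=
    (((U ℝ (n : ℤ)).hasDerivAt (Real.cos t)).comp t (Real.hasDerivAt_cos t)).mul
      (Real.hasDerivAt_sin t)
  have hR : HasDerivAt (fun θ : ℝ => Real.sin (((n : ℝ) + 1) * θ))
      (Real.cos (((n : ℝ) + 1) * t) * ((n : ℝ) + 1)) t :=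
by
    have := (Real.hasDerivAt_sin (((n : ℝ) + 1) * t)).comp t
      ((hasDerivAt_id t).const_mul ((n : ℝ) + 1))
    simpa [Function.comp_def] using this
  rw [funext hU] at hL
  have hE := hL.unique hR
  have h1 := hU t
  linear_combination (-Real.sin t) * hE + Real.cos t * h1

open Real in
lemma aux_g_pos (n : ℕ) (hn2 : 2 < n) (t : ℝ) (ht : t ∈ Set.Ioo 0 (π / n)) :
    0 < Real.sin (((n : ℝ) + 1) * t) * Real.cos t
        - ((n : ℝ) + 1) * Real.cos (((n : ℝ) + 1) * t) * Real.sin t := by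
  obtain ⟨ht0, htn⟩ := ht
  obtain ⟨c, hc⟩ : ∃ c : ℝ, c = (n : ℝ) + 1 := ⟨_, rfl⟩
  rw [← hc]
  obtain ⟨g, hgdef⟩ : ∃ g : ℝ → ℝ,
      g = fun s => Real.sin (c * s) * Real.cos s - c * Real.cos (c * s) * Real.sin s := ⟨_, rfl⟩
  have hn0 : (0 : ℝ) < n := by exact_mod_cast by omega
  have hn3 : (3 : ℝ) ≤ n := by exact_mod_cast by omega
  have hcpos : (0 : ℝ) < c := by rw [hc]; positivity
  have hπ := Real.pi_pos
  have hg : ∀ s : ℝ, HasDerivAt g ((c ^ 2 - 1) * (Real.sin (c * s) * Real.sin s)) s := by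
    intro s
    have h1 : HasDerivAt (fun s : ℝ => Real.sin (c * s)) (c * Real.cos (c * s)) s := by
      have := (Real.hasDerivAt_sin (c * s)).comp s ((hasDerivAt_id s).const_mul c)
      simpa [Function.comp_def, mul_comm] using this
    have h2 : HasDerivAt (fun s : ℝ => Real.cos (c * s)) (-(c * Real.sin (c * s))) s := by
      have := (Real.hasDerivAt_cos (c * s)).comp s ((hasDerivAt_id s).const_mul c)
      simpa [Function.comp_def, mul_comm] using this
    have h3 := (h1.mul (Real.hasDerivAt_cos s)).sub ((h2.const_mul c).mul (Real.hasDerivAt_sin s))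
    rw [hgdef]
    refine h3.congr_deriv ?_
    ring
  have hcont : Continuous g := by
    rw [hgdef]; fun_prop
  have hderiv : ∀ s : ℝ, deriv g s = (c ^ 2 - 1) * (Real.sin (c * s) * Real.sin s) :=
    fun s => (hg s).deriv
  -- g(π/n) > 0
  have hcn : c * (π / n) = π / n + π := by rw [hc]; field_simp; ring
  have hsinn : 0 < Real.sin (π / n) := by
    apply Real.sin_pos_of_pos_of_lt_pi
    · positivity
    · rw [div_lt_iff₀ hn0]; nlinarith
  have hcosn : 0 < Real.cos (π / n) := by
    apply Real.cos_pos_of_mem_Ioo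
    constructor
    · linarith [show (0:ℝ) < π / n by positivity]
    · rw [div_lt_iff₀ hn0]; nlinarith
  have hgend : 0 < g (π / n) := by
    simp only [hgdef, hcn, Real.sin_add_pi, Real.cos_add_pi]
    have : -Real.sin (π / n) * Real.cos (π / n) - c * -Real.cos (π / n) * Real.sin (π / n)
        = (c - 1) * (Real.sin (π / n) * Real.cos (π / n)) := by ring
    rw [this]
    have : (0:ℝ) < c - 1 := by rw [hc]; linarith
    positivity
  rcases le_or_gt t (π / c) with hle | hlt
  · -- strictly increasing on [0, π/c]
    have hmono : StrictMonoOn g (Set.Icc 0 (π / c)) := by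
      apply strictMonoOn_of_deriv_pos (convex_Icc _ _) hcont.continuousOn
      intro s hs
      rw [interior_Icc] at hs
      obtain ⟨hs0, hsc⟩ := hs
      rw [hderiv]
      have h1 : 0 < Real.sin s := by
        apply Real.sin_pos_of_pos_of_lt_pi hs0
        calc s < π / c := hsc
        _ ≤ π := by rw [div_le_iff₀ hcpos]; nlinarith
      have h2 : 0 < Real.sin (c * s) := by
        apply Real.sin_pos_of_pos_of_lt_pi (by positivity)
        calc c * s < c * (π / c) := by exact mul_lt_mul_of_pos_left hsc hcpos
        _ = π := by field_simp
      have h3 : (0:ℝ) < c ^ 2 - 1 := by nlinarith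
      positivity
    have hπc : 0 ≤ π / c := by positivity
    have ht' : t ∈ Set.Icc 0 (π / c) := ⟨ht0.le, hle⟩
    have := hmono (Set.left_mem_Icc.2 hπc) ht' ht0
    simpa [hgdef] using this
  · -- antitone on [π/c, π/n]
    have hanti : AntitoneOn g (Set.Icc (π / c) (π / n)) := by
      apply antitoneOn_of_deriv_nonpos (convex_Icc _ _) hcont.continuousOn
      · exact fun s _ => (hg s).differentiableAt.differentiableWithinAt
      intro s hs
      rw [interior_Icc] at hs
      obtain ⟨hs1, hs2⟩ := hs
      rw [hderiv]
      have hsp : 0 < s := lt_trans (by positivity) hs1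
      have h1 : 0 ≤ Real.sin s := by
        apply Real.sin_nonneg_of_nonneg_of_le_pi hsp.le
        calc s ≤ π / n := hs2.le
        _ ≤ π := by rw [div_le_iff₀ hn0]; nlinarith
      have h2 : Real.sin (c * s) ≤ 0 := by
        have e : c * s = (c * s - π) + π := by ring
        rw [e, Real.sin_add_pi, neg_nonpos]
        apply Real.sin_nonneg_of_nonneg_of_le_pi
        · have : π < c * s := by
            calc π = c * (π / c) := by field_simp
            _ < c * s := mul_lt_mul_of_pos_left hs1 hcpos
          linarith
        · have : c * s < c * (π / n) := mul_lt_mul_of_pos_left hs2 hcpos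
          rw [hcn] at this
          have hπn2 : π / n ≤ π := by rw [div_le_iff₀ hn0]; nlinarith
          linarith
      have h3 : (0:ℝ) < c ^ 2 - 1 := by nlinarith
      nlinarith [mul_nonneg h3.le (neg_nonneg.2 (mul_nonpos_of_nonpos_of_nonneg h2 h1))]
    have hπcn : π / c ≤ π / n := by
      apply div_le_div_of_nonneg_left hπ.le hn0
      rw [hc]; linarith
    have ht' : t ∈ Set.Icc (π / c) (π / n) := ⟨hlt.le, htn.le⟩
    have := hanti ht' (Set.right_mem_Icc.2 hπcn) htn.le
    have hfin := lt_of_lt_of_le hgend this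
    simpa [hgdef] using hfin

lemma aux_two_le (x : ℝ) (hx : 1 ≤ x) : ∀ m : ℕ,
    2 ≤ (derivative (U ℝ ((m : ℤ) + 1))).eval x := by
  intro m
  induction m with
  | zero =>
    norm_num [show ((0:ℕ) : ℤ) + 1 = 1 from rfl, U_one, derivative_mul]
  | succ k ih =>
    have h4 := (aux_ge_one x hx (k + 1)).2.2.2
    have hc : ((k + 1 : ℕ) : ℤ) = (k : ℤ) + 1 := by push_cast; ring
    rw [hc] at h4 ⊢
    linarith

theorem stmt_9 (n : ℕ) (hn2 : 2 < n) (hne : Even n) :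
    (∀ x : ℝ, x ∈ Set.Ioo (Real.cos (Real.pi / n)) 1 →
      0 < (derivative (U ℝ (n : ℤ))).eval x) ∧
    (∀ x : ℝ, (derivative (U ℝ (n : ℤ))).eval x = 0 → x ≤ Real.cos (Real.pi / n)) := by
  have hπ := Real.pi_pos
  have hn0 : (0 : ℝ) < n := by exact_mod_cast by omega
  have hn3 : (3 : ℝ) ≤ n := by exact_mod_cast by omega
  have hpart1 : ∀ x : ℝ, x ∈ Set.Ioo (Real.cos (Real.pi / n)) 1 →
      0 < (derivative (U ℝ (n : ℤ))).eval x := by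
    intro x ⟨hx1, hx2⟩
    have hneg : -1 ≤ x := le_trans (Real.neg_one_le_cos _) hx1.le
    set t := Real.arccos x with htdef
    have htc : Real.cos t = x := Real.cos_arccos hneg hx2.le
    have ht0 : 0 < t := Real.arccos_pos.2 hx2
    have htn : t < Real.pi / n := by
      by_contra hcon
      push_neg at hcon
      have := Real.cos_le_cos_of_nonneg_of_le_pi (by positivity) (Real.arccos_le_pi x) hcon
      rw [htc] at this
      linarith
    have hg := aux_g_pos n hn2 t ⟨ht0, htn⟩
    have heq := aux_deriv_eq n t
    have hsin : 0 < Real.sin t := by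
      apply Real.sin_pos_of_pos_of_lt_pi ht0
      have : Real.pi / n ≤ Real.pi := by
        rw [div_le_iff₀ hn0]; nlinarith
      linarith
    rw [htc] at heq hg
    nlinarith [pow_pos hsin 3, heq, hg]
  refine ⟨hpart1, ?_⟩
  intro x hx
  by_contra hcon
  push_neg at hcon
  rcases lt_or_ge x 1 with h1 | h1
  · exact absurd hx (ne_of_gt (hpart1 x ⟨hcon, h1⟩))
  · obtain ⟨m, hm⟩ : ∃ m : ℕ, n = m + 1 := ⟨n - 1, by omega⟩
    have h2 := aux_two_le x h1 m
    have hc : (n : ℤ) = (m : ℤ) + 1 := by rw [hm]; push_cast; ring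
    rw [← hc, hx] at h2
    linarith
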